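/- Let a < b be real numbers and let r : [a,b] → ℝ be continuous. Set C = ∫_a^b r(t) dt and R(z) = ∫_a^z r(t) dt. If for every z ∈ (a,b), −C²/(b−a)² + R(z)²/((b−a)(z−a)) + (C−R(z))²/((b−a)(b−z)) = 0, then r is constant on [a,b]. -/

import Mathlib

open Filter Topology

/-- Univariate case of Lemma 1 of the paper: if the population CART criterion
`L*(1,z)` vanishes for every cut position `z ∈ (a,b)`, the regression function `r`
is constant on `[a,b]`. -/
theorem stmt_7 (a b : ℝ) (hab : a < b) (r : ℝ → ℝ)
    (hr : ContinuousOn r (Set.Icc a b))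
    (h : ∀ z ∈ Set.Ioo a b,
      -(∫ t in a..b, r t) ^ 2 / (b - a) ^ 2
        + (∫ t in a..z, r t) ^ 2 / ((b - a) * (z - a))
        + ((∫ t in a..b, r t) - ∫ t in a..z, r t) ^ 2 / ((b - a) * (b - z)) = 0) :
    ∃ c, ∀ x ∈ Set.Icc a b, r x = c := by
  set C := ∫ t in a..b, r t with hC
  set c := C / (b - a) with hc
  have hba : (0:ℝ) < b - a := by linarith
  -- Step 1: the primitive is linear on (a,b)
  have key : ∀ z ∈ Set.Ioo a b, (∫ t in a..z, r t) = c * (z - a) := by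
    intro z hz
    obtain ⟨hz1, hz2⟩ := hz
    have h1 : (0:ℝ) < z - a := by linarith
    have h2 : (0:ℝ) < b - z := by linarith
    have hE := h z ⟨hz1, hz2⟩
    set R := ∫ t in a..z, r t with hR
    have hlin : (b - a) * R = C * (z - a) := by
      have hne1 : (b - a) ≠ 0 := ne_of_gt hba
      have hne2 : (z - a) ≠ 0 := ne_of_gt h1
      have hne3 : (b - z) ≠ 0 := ne_of_gt h2
      field_simp at hE
      have hsq : (b - a) ^ 2 * ((b - a) * R - C * (z - a)) ^ 2 = 0 := by
        linear_combination (b - a) ^ 2 * hE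
      have hsq' : ((b - a) * R - C * (z - a)) ^ 2 = 0 := by
        have := sq_nonneg (b - a)
        have := sq_nonneg ((b - a) * R - C * (z - a))
        nlinarith [pow_pos hba 2]
      have := pow_eq_zero_iff (n := 2) (by norm_num) |>.mp hsq'
      linarith [sub_eq_zero.mp this]
    rw [hc]
    field_simp
    linarith
  -- Step 2: differentiate to get r = c on (a,b)
  have hmid : ∀ x ∈ Set.Ioo a b, r x = c := by
    intro x hx
    have hnx : Set.Icc a b ∈ 𝓝 x := Icc_mem_nhds hx.1 hx.2
    have hcx : ContinuousAt r x := hr.continuousAt hnx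
    have hint : IntervalIntegrable r MeasureTheory.volume a x := by
      apply (hr.mono _).intervalIntegrable
      rw [Set.uIcc_of_le hx.1.le]
      exact Set.Icc_subset_Icc le_rfl hx.2.le
    have hmeas : StronglyMeasurableAtFilter r (𝓝 x) :=
      (hr.mono Set.Ioo_subset_Icc_self).stronglyMeasurableAtFilter isOpen_Ioo x hx
    have hF : HasDerivAt (fun z => ∫ t in a..z, r t) (r x) x :=
      intervalIntegral.integral_hasDerivAt_right hint hmeas hcx
    have heq : (fun z => ∫ t in a..z, r t) =ᶠ[𝓝 x] fun z => c * (z - a) := by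
      filter_upwards [isOpen_Ioo.mem_nhds hx] with z hz using key z hz
    have hF' : HasDerivAt (fun z => c * (z - a)) (r x) x := hF.congr_of_eventuallyEq heq.symm
    have hG : HasDerivAt (fun z => c * (z - a)) c x := by
      simpa using ((hasDerivAt_id x).sub_const a).const_mul c
    exact hF'.unique hG
  -- Step 3: endpoints by continuity
  have hne : (𝓝[Set.Ioo a b] a).NeBot := by
    refine mem_closure_iff_nhdsWithin_neBot.mp ?_
    rw [closure_Ioo hab.ne]
    exact Set.left_mem_Icc.mpr hab.le
  have hne' : (𝓝[Set.Ioo a b] b).NeBot := by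
    refine mem_closure_iff_nhdsWithin_neBot.mp ?_
    rw [closure_Ioo hab.ne]
    exact Set.right_mem_Icc.mpr hab.le
  have hconst : Tendsto r (𝓝[Set.Ioo a b] a) (𝓝 c) := by
    refine Tendsto.congr' ?_ tendsto_const_nhds
    filter_upwards [eventually_mem_nhdsWithin] with z hz
    exact (hmid z hz).symm
  have hconst' : Tendsto r (𝓝[Set.Ioo a b] b) (𝓝 c) := by
    refine Tendsto.congr' ?_ tendsto_const_nhds
    filter_upwards [eventually_mem_nhdsWithin] with z hz
    exact (hmid z hz).symm
  have hta : Tendsto r (𝓝[Set.Ioo a b] a) (𝓝 (r a)) :=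
    ((hr a (Set.left_mem_Icc.mpr hab.le)).mono Set.Ioo_subset_Icc_self)
  have htb : Tendsto r (𝓝[Set.Ioo a b] b) (𝓝 (r b)) :=
    ((hr b (Set.right_mem_Icc.mpr hab.le)).mono Set.Ioo_subset_Icc_self)
  have hra : r a = c := tendsto_nhds_unique hta hconst
  have hrb : r b = c := tendsto_nhds_unique htb hconst'
  refine ⟨c, fun x hx => ?_⟩
  rcases eq_or_lt_of_le hx.1 with h1 | h1
  · rw [← h1]; exact hra
  rcases eq_or_lt_of_le hx.2 with h2 | h2
  · rw [h2]; exact hrb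
  exact hmid x ⟨h1, h2⟩
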